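/- Let H be a Hopf algebra over a field k, I ⊆ H a coideal right ideal with projection π: H → H/I, B := H^{co H/I}, and suppose B ⊆ H is a homogeneous H/I-Galois extension. For n ≥ 0 consider the assignment ψ̃_n: (π(g⁰) ⊗ ⋯ ⊗ π(gⁿ)) ⊗ h ↦ [gⁿ(2) h S(g⁰(1)) ⊗_B g⁰(2) S(g¹(1)) ⊗_B ⋯ ⊗_B g^{n-1}(2) S(gⁿ(1))]_B ∈ [H^{⊗_B (n+1)}]_B. Then: (i) the right hand side depends only on the classes π(g⁰), …, π(gⁿ) and not on the chosen representatives; and (ii) for every p ∈ H, ψ̃_n((π(g⁰) ⊗ ⋯ ⊗ π(gⁿ))·p ⊗ h) = ψ̃_n((π(g⁰) ⊗ ⋯ ⊗ π(gⁿ)) ⊗ (p ▷ h)), where (π(g⁰) ⊗ ⋯ ⊗ π(gⁿ))·p = π(g⁰ p(1)) ⊗ ⋯ ⊗ π(gⁿ p(n+1)) is the diagonal right H-action and p ▷ h = p(2) h S(p(1)). Consequently ψ̃_n induces a well-defined linear map ψ_n: (H/I)^{⊗(n+1)} ⊗_H ad(H) → [H^{⊗_B (n+1)}]_B. -/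

import Mathlib

open TensorProduct

noncomputable section

universe u

variable (k : Type u) [Field k]

/-- Left-nested tensor powers: `Tq k M n` has `n` tensor factors (`Tq k M 0 = k`). -/
def Tq (M : Type u) [AddCommGroup M] [Module k M] : ℕ → ModuleCat k
  | 0 => ModuleCat.of k k
  | n + 1 => ModuleCat.of k ((Tq M n) ⊗[k] M)

variable (H : Type u) [Ring H] [HopfAlgebra k H]

/-- right multiplication by `b` at position `j` (0-indexed) of `Tq k H n`. -/
def qmulR (b : H) : (n : ℕ) → ℕ → ((Tq k H n : Type u) →ₗ[k] Tq k H n)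
  | 0, _ => LinearMap.id
  | n + 1, j =>
    if j = n then LinearMap.lTensor (Tq k H n) (LinearMap.mulRight k b)
    else LinearMap.rTensor H (qmulR b n j)

/-- left multiplication by `b` at position `j` of `Tq k H n`. -/
def qmulL (b : H) : (n : ℕ) → ℕ → ((Tq k H n : Type u) →ₗ[k] Tq k H n)
  | 0, _ => LinearMap.id
  | n + 1, j =>
    if j = n then LinearMap.lTensor (Tq k H n) (LinearMap.mulLeft k b)
    else LinearMap.rTensor H (qmulL b n j)

/-- functorial push-forward along a linear map on all factors. -/
def qpush {M M' : Type u} [AddCommGroup M] [Module k M] [AddCommGroup M'] [Module k M']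
    (f : M →ₗ[k] M') : (n : ℕ) → ((Tq k M n : Type u) →ₗ[k] Tq k M' n)
  | 0 => LinearMap.id
  | n + 1 => TensorProduct.map (qpush f n) f

/-- diagonal right `H`-action on `Tq k M n` induced by an action `act : M ⊗ H → M`. -/
def qdiag {M : Type u} [AddCommGroup M] [Module k M] (act : M ⊗[k] H →ₗ[k] M) :
    (n : ℕ) → ((Tq k M n : Type u) ⊗[k] H →ₗ[k] Tq k M n)
  | 0 => (TensorProduct.lid k k).toLinearMap.comp
      (LinearMap.lTensor k (Coalgebra.counit (R := k)))
  | n + 1 =>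
    (TensorProduct.map (qdiag act n) act).comp
      ((TensorProduct.tensorTensorTensorComm k (Tq k M n) M H H).toLinearMap.comp
        (LinearMap.lTensor ((Tq k M n : Type u) ⊗[k] M) (Coalgebra.comul (R := k))))

end

noncomputable section


variable (k : Type u) [Field k] (H : Type u) [Ring H] [HopfAlgebra k H]

/-- the left adjoint action `adAct (h ⊗ m) = h₍₂₎ * m * S(h₍₁₎)` as a linear map. -/
def adAct : H ⊗[k] H →ₗ[k] H :=
  (LinearMap.mul' k H).comp
    ((TensorProduct.comm k H H).toLinearMap.comp
      ((LinearMap.lTensor H (LinearMap.mul' k H)).comp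
        ((TensorProduct.assoc k H H H).toLinearMap.comp
          ((LinearMap.rTensor H (LinearMap.rTensor H (HopfAlgebra.antipode (R := k)))).comp
            (LinearMap.rTensor H (Coalgebra.comul (R := k)))))))

variable (I : Submodule k H)

/-- `I` is a coideal right ideal of `H`. -/
def IsCoidealRightIdeal : Prop :=
  (∀ x ∈ I, ∀ h : H, x * h ∈ I) ∧
  (∀ x ∈ I, Coalgebra.counit (R := k) x = (0 : k)) ∧
  (∀ x ∈ I, Coalgebra.comul (R := k) x ∈
    LinearMap.range (TensorProduct.map I.subtype (LinearMap.id (M := H))) ⊔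
      LinearMap.range (TensorProduct.map (LinearMap.id (M := H)) I.subtype))

/-- `b ∈ B = H^{co H/I}`:  `b₍₁₎ ⊗ π(b₍₂₎) = b ⊗ π(1)`. -/
def IsCoinvariant (b : H) : Prop :=
  (LinearMap.lTensor H I.mkQ) (Coalgebra.comul (R := k) b) = b ⊗ₜ[k] I.mkQ 1

/-- the right `H`-action on `H/I` descended from right multiplication. -/
def actC (hIr : ∀ x ∈ I, ∀ h : H, x * h ∈ I) : (H ⧸ I) ⊗[k] H →ₗ[k] H ⧸ I :=
  TensorProduct.lift (I.liftQ ((LinearMap.mul k H).compr₂ I.mkQ)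
    (by
      intro x hx
      rw [LinearMap.mem_ker]
      ext h
      simpa using (Submodule.Quotient.mk_eq_zero I).mpr (hIr x hx h)))

/-- `Δ₂q : u ↦ (u₍₂₎ ⊗ π(u₍₃₎)) ⊗ u₍₁₎`. -/
def deltaTwoQ : H →ₗ[k] (H ⊗[k] (H ⧸ I)) ⊗[k] H :=
  (TensorProduct.comm k H (H ⊗[k] (H ⧸ I))).toLinearMap.comp
    ((LinearMap.lTensor H ((LinearMap.lTensor H I.mkQ).comp (Coalgebra.comul (R := k)))).comp
      (Coalgebra.comul (R := k)))

/-- `Gmap n : h¹ ⊗ ⋯ ⊗ hⁿ ↦ (π(h¹₍₂₎⋯hⁿ₍₂₎) ⊗ ⋯ ⊗ π(hⁿ₍ₙ₊₁₎)) ⊗ (h¹₍₁₎⋯hⁿ₍₁₎)`. -/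
def Gmap (hIr : ∀ x ∈ I, ∀ h : H, x * h ∈ I) :
    (n : ℕ) → ((Tq k H n : Type u) →ₗ[k] (Tq k (H ⧸ I) n : Type u) ⊗[k] H)
  | 0 => (TensorProduct.mk k (Tq k (H ⧸ I) 0 : Type u) H).flip 1
  | n + 1 =>
    (TensorProduct.map
        ((LinearMap.rTensor (H ⧸ I) (qdiag k H (actC k H I hIr) n)).comp
          (TensorProduct.assoc k (Tq k (H ⧸ I) n) H (H ⧸ I)).symm.toLinearMap)
        (LinearMap.mul' k H)).comp
      ((TensorProduct.tensorTensorTensorComm k (Tq k (H ⧸ I) n) H (H ⊗[k] (H ⧸ I))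
          H).toLinearMap.comp
        ((LinearMap.lTensor ((Tq k (H ⧸ I) n : Type u) ⊗[k] H) (deltaTwoQ k H I)).comp
          (LinearMap.rTensor H (Gmap hIr n))))

/-- representative level `φ̃ₙ : h⁰ ⊗ (h¹ ⊗ ⋯ ⊗ hⁿ) ↦
`(π(h¹₍₂₎⋯hⁿ₍₂₎) ⊗ ⋯ ⊗ π(hⁿ₍ₙ₊₁₎) ⊗ π(1)) ⊗ (h⁰h¹₍₁₎⋯hⁿ₍₁₎)`. -/
def phiTilde (hIr : ∀ x ∈ I, ∀ h : H, x * h ∈ I) (n : ℕ) :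
    H ⊗[k] (Tq k H n : Type u) →ₗ[k] (Tq k (H ⧸ I) (n + 1) : Type u) ⊗[k] H :=
  (TensorProduct.map ((TensorProduct.mk k (Tq k (H ⧸ I) n : Type u) (H ⧸ I)).flip (I.mkQ 1))
      (LinearMap.mul' k H)).comp
    ((TensorProduct.leftComm k H (Tq k (H ⧸ I) n) H).toLinearMap.comp
      (LinearMap.lTensor H (Gmap k H I hIr n)))

/-- `Jmap n : g⁰ ⊗ ⋯ ⊗ gⁿ ↦ (S(g⁰₍₁₎) ⊗ (g⁰₍₂₎S(g¹₍₁₎) ⊗ ⋯ ⊗ gⁿ⁻¹₍₂₎S(gⁿ₍₁₎))) ⊗ gⁿ₍₂₎`. -/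
def Jmap : (n : ℕ) →
    ((Tq k H (n + 1) : Type u) →ₗ[k] (H ⊗[k] (Tq k H n : Type u)) ⊗[k] H)
  | 0 =>
    (LinearMap.rTensor H (TensorProduct.comm k (Tq k H 0 : Type u) H).toLinearMap).comp
      (((TensorProduct.assoc k (Tq k H 0 : Type u) H H).symm.toLinearMap).comp
        (LinearMap.lTensor (Tq k H 0 : Type u)
          ((LinearMap.rTensor H (HopfAlgebra.antipode (R := k))).comp
            (Coalgebra.comul (R := k)))))
  | n + 1 =>
    (LinearMap.rTensor H
        (((TensorProduct.assoc k H (Tq k H n) H).toLinearMap).comp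
          ((LinearMap.lTensor (H ⊗[k] (Tq k H n : Type u)) (LinearMap.mul' k H)).comp
            (TensorProduct.assoc k (H ⊗[k] (Tq k H n : Type u)) H H).toLinearMap))).comp
      (((TensorProduct.assoc k ((H ⊗[k] (Tq k H n : Type u)) ⊗[k] H) H H).symm.toLinearMap).comp
        ((LinearMap.lTensor ((H ⊗[k] (Tq k H n : Type u)) ⊗[k] H)
            ((LinearMap.rTensor H (HopfAlgebra.antipode (R := k))).comp
              (Coalgebra.comul (R := k)))).comp
          (LinearMap.rTensor H (Jmap n))))

/-- representative level `ψ̃ₙ : (g⁰ ⊗ ⋯ ⊗ gⁿ) ⊗ h ↦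
`gⁿ₍₂₎hS(g⁰₍₁₎) ⊗ (g⁰₍₂₎S(g¹₍₁₎) ⊗ ⋯ ⊗ gⁿ⁻¹₍₂₎S(gⁿ₍₁₎))`. -/
def psiRep (n : ℕ) :
    (Tq k H (n + 1) : Type u) ⊗[k] H →ₗ[k] H ⊗[k] (Tq k H n : Type u) :=
  (LinearMap.rTensor (Tq k H n) (LinearMap.mul' k H)).comp
    (((TensorProduct.assoc k H H (Tq k H n)).symm.toLinearMap).comp
      ((TensorProduct.comm k (H ⊗[k] (Tq k H n : Type u)) H).toLinearMap.comp
        ((LinearMap.lTensor (H ⊗[k] (Tq k H n : Type u)) (LinearMap.mul' k H)).comp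
          (((TensorProduct.assoc k (H ⊗[k] (Tq k H n : Type u)) H H).toLinearMap).comp
            (LinearMap.rTensor H (Jmap k H n))))))

/-- right multiplication by `b` at slot `j` of `H ⊗ H^{⊗n}` (slot 0 is the first factor). -/
def posR (b : H) (n : ℕ) (j : ℕ) : H ⊗[k] (Tq k H n : Type u) →ₗ[k] H ⊗[k] (Tq k H n : Type u) :=
  if j = 0 then LinearMap.rTensor (Tq k H n) (LinearMap.mulRight k b)
  else LinearMap.lTensor H (qmulR k H b n (j - 1))

/-- left multiplication by `b` at slot `j` of `H ⊗ H^{⊗n}`. -/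
def posL (b : H) (n : ℕ) (j : ℕ) : H ⊗[k] (Tq k H n : Type u) →ₗ[k] H ⊗[k] (Tq k H n : Type u) :=
  if j = 0 then LinearMap.rTensor (Tq k H n) (LinearMap.mulLeft k b)
  else LinearMap.lTensor H (qmulL k H b n (j - 1))

/-- The cyclic `B`-relations defining `C_n(H ∣ B) = [H^{⊗_B (n+1)}]_B` inside `H^{⊗(n+1)}`:
inserting `b ∈ B` between cyclically adjacent slots from either side. -/
def relCyc (n : ℕ) : Submodule k (H ⊗[k] (Tq k H n : Type u)) :=
  Submodule.span k
    {x | ∃ (b : H) (v : H ⊗[k] (Tq k H n : Type u)) (j : Fin (n + 1)),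
      IsCoinvariant k H I b ∧
      x = posR k H b n j v - posL k H b n (((j : ℕ) + 1) % (n + 1)) v}

/-- The `⊗_H`-relations defining `(H/I)^{⊗(n+1)} ⊗_H ad(H)` inside `(H/I)^{⊗(n+1)} ⊗ H`
(written on representatives, using the diagonal right action and the adjoint action). -/
def relAd (n : ℕ) : Submodule k ((Tq k (H ⧸ I) (n + 1) : Type u) ⊗[k] H) :=
  Submodule.span k
    {x | ∃ (v : (Tq k H (n + 1) : Type u)) (p m : H),
      x = (qpush k I.mkQ (n + 1) (qdiag k H (LinearMap.mul' k H) (n + 1) (v ⊗ₜ[k] p))) ⊗ₜ[k] m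
          - (qpush k I.mkQ (n + 1) v) ⊗ₜ[k] (adAct k H (p ⊗ₜ[k] m))}

end

noncomputable section


variable (k : Type u) [Field k] (H : Type u) [Ring H] [HopfAlgebra k H] (I : Submodule k H)

/-- The subspace of `H ⊗ H` of relations defining `H ⊗_B H`. -/
def relB : Submodule k (H ⊗[k] H) :=
  Submodule.span k
    {x : H ⊗[k] H | ∃ g g' b : H, IsCoinvariant k H I b ∧
      x = (g * b) ⊗ₜ[k] g' - g ⊗ₜ[k] (b * g')}

/-- The representative-level canonical map `H ⊗ H → H ⊗ H/I`, `h ⊗ h' ↦ h h'₍₁₎ ⊗ π(h'₍₂₎)`. -/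
def canTilde : H ⊗[k] H →ₗ[k] H ⊗[k] (H ⧸ I) :=
  (LinearMap.rTensor (H ⧸ I) (LinearMap.mul' k H)).comp
    (((TensorProduct.assoc k H H (H ⧸ I)).symm.toLinearMap).comp
      (LinearMap.lTensor H ((LinearMap.lTensor H I.mkQ).comp (Coalgebra.comul (R := k)))))

/-- `B = H^{co H/I} ⊆ H` is a (homogeneous) `H/I`-Galois extension: the canonical map
descends to a bijection `H ⊗_B H ≃ H ⊗ H/I`. -/
def IsGaloisExtension : Prop :=
  ∃ e : ((H ⊗[k] H) ⧸ relB k H I) ≃ₗ[k] H ⊗[k] (H ⧸ I),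
    ∀ x : H ⊗[k] H, e (Submodule.Quotient.mk x) = canTilde k H I x

end

/-!
STATEMENT 7:  Let `I ⊆ H` be a coideal right ideal such that `B = H^{co H/I} ⊆ H` is a
homogeneous `H/I`-Galois extension.  For `n ≥ 0` consider
`ψ̃ₙ : (π(g⁰) ⊗ ⋯ ⊗ π(gⁿ)) ⊗ h ↦ [gⁿ₍₂₎hS(g⁰₍₁₎) ⊗_B g⁰₍₂₎S(g¹₍₁₎) ⊗_B ⋯ ⊗_B gⁿ⁻¹₍₂₎S(gⁿ₍₁₎)]_B`.
Then (i) the value depends only on the classes `π(gⁱ)`, (ii) it is `⊗_H`-balanced for the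
diagonal right action and the adjoint action `p ▷ h = p₍₂₎hS(p₍₁₎)`, and consequently (iii)
`ψ̃ₙ` induces a well-defined linear map `ψₙ : (H/I)^{⊗(n+1)} ⊗_H ad(H) → [H^{⊗_B(n+1)}]_B`.

Here `psiRep k H n : H^{⊗(n+1)} ⊗ H → H ⊗ H^{⊗n}` is the representative-level map
(`H^{⊗(n+1)} = Tq k H (n+1)`), `relCyc` gives the cyclic `B`-relations of `[H^{⊗_B(n+1)}]_B`,
`relAd` gives the `⊗_H`-relations, `qpush π` is `π` applied factorwise, and `qdiag` the
diagonal right action.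
-/


set_option synthInstance.maxHeartbeats 1000000
set_option maxHeartbeats 1000000
open TensorProduct Coalgebra HopfAlgebra LinearMap

namespace Aux
variable {k : Type u} [Field k] {H : Type u} [Ring H] [HopfAlgebra k H]

local notation "S" => (HopfAlgebra.antipode (R := k) (A := H))
local notation "Δ" => (Coalgebra.comul (R := k) (A := H))
local notation "ε" => (Coalgebra.counit (R := k) (A := H))
local notation "μ" => (LinearMap.mul' k H)

/-- a representation of `comul a` as a finite sum of pure tensors (with bundled index type). -/
structure Repr (R : Type u) {A : Type u} [CommSemiring R] [AddCommMonoid A] [Module R A]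
    [CoalgebraStruct R A] (a : A) where
  {ι : Type u}
  index : Finset ι
  left : ι → A
  right : ι → A
  eq : ∑ i ∈ index, left i ⊗ₜ[R] right i = CoalgebraStruct.comul a

/-- An arbitrarily chosen representation. -/
noncomputable def Repr.arbitrary (R : Type u) {A : Type u} [CommSemiring R] [AddCommMonoid A]
    [Module R A] [CoalgebraStruct R A] (a : A) : Repr R a :=
  ⟨(Coalgebra.Repr.arbitrary R a).index, Prod.fst, Prod.snd, (Coalgebra.Repr.arbitrary R a).eq⟩

lemma antipode_one : S (1 : H) = 1 := by
  have h := HopfAlgebra.mul_antipode_rTensor_comul_apply (R := k) (a := (1:H))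
  rw [Bialgebra.comul_one, Algebra.TensorProduct.one_def] at h
  simpa using h

/-- `∑ ε(a₁) • a₂ = a`. -/
lemma sum_counit_smul {a : H} (r : Repr k a) :
    ∑ i ∈ r.index, ε (r.left i) • r.right i = a := by
  have h := Coalgebra.sum_counit_tmul_eq ⟨r.index, r.left, r.right, r.eq⟩
  have h2 : ∑ i ∈ r.index, (TensorProduct.lid k H) (ε (r.left i) ⊗ₜ[k] r.right i)
      = TensorProduct.lid k H ((1:k) ⊗ₜ[k] a) := by rw [← map_sum, h]
  simpa using h2

/-- `∑ ε(a₂) • a₁ = a`. -/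
lemma sum_smul_counit {a : H} (r : Repr k a) :
    ∑ i ∈ r.index, ε (r.right i) • r.left i = a := by
  have h := Coalgebra.sum_tmul_counit_eq ⟨r.index, r.left, r.right, r.eq⟩
  have h2 : ∑ i ∈ r.index, (TensorProduct.rid k H) (r.left i ⊗ₜ[k] ε (r.right i))
      = TensorProduct.rid k H (a ⊗ₜ[k] (1:k)) := by rw [← map_sum, h]
  simpa using h2

/-- product representation -/
def Repr.mul {a b : H} (r : Repr k a) (s : Repr k b) : Repr k (a * b) where
  ι := r.ι × s.ι
  index := r.index ×ˢ s.index
  left := fun p => r.left p.1 * s.left p.2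
  right := fun p => r.right p.1 * s.right p.2
  eq := by
    rw [Bialgebra.comul_mul, ← r.eq, ← s.eq, Finset.sum_mul_sum]
    rw [Finset.sum_product]
    simp [Algebra.TensorProduct.tmul_mul_tmul]




/-- `XiL (y ⊗ z) = ∑ (S y * z₁) ⊗ z₂` -/
noncomputable def XiL : H ⊗[k] H →ₗ[k] H ⊗[k] H :=
  (LinearMap.rTensor H (μ ∘ₗ LinearMap.rTensor H S)) ∘ₗ
    (TensorProduct.assoc k H H H).symm.toLinearMap ∘ₗ (LinearMap.lTensor H Δ)

/-- `XiM (y ⊗ z) = ∑ (y * S z₁) ⊗ z₂` -/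
noncomputable def XiM : H ⊗[k] H →ₗ[k] H ⊗[k] H :=
  (LinearMap.rTensor H (μ ∘ₗ LinearMap.lTensor H S)) ∘ₗ
    (TensorProduct.assoc k H H H).symm.toLinearMap ∘ₗ (LinearMap.lTensor H Δ)

lemma XiL_tmul (y z : H) (rz : Repr k z) :
    XiL (y ⊗ₜ[k] z) = ∑ i ∈ rz.index, (S y * rz.left i) ⊗ₜ[k] rz.right i := by
  simp only [XiL, LinearMap.comp_apply, LinearMap.lTensor_tmul, LinearEquiv.coe_coe]
  rw [← rz.eq]
  simp [tmul_sum, map_sum]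

lemma XiM_tmul (y z : H) (rz : Repr k z) :
    XiM (y ⊗ₜ[k] z) = ∑ i ∈ rz.index, (y * S (rz.left i)) ⊗ₜ[k] rz.right i := by
  simp only [XiM, LinearMap.comp_apply, LinearMap.lTensor_tmul, LinearEquiv.coe_coe]
  rw [← rz.eq]
  simp [tmul_sum, map_sum]

lemma XiL_comul (a : H) : XiL (Δ a) = (1 : H) ⊗ₜ[k] a := by
  simp only [XiL, LinearMap.comp_apply, LinearEquiv.coe_coe]
  rw [coassoc_symm_apply, ← LinearMap.comp_apply, ← LinearMap.rTensor_comp,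
    LinearMap.comp_assoc, mul_antipode_rTensor_comul, LinearMap.rTensor_comp]
  simp only [LinearMap.comp_apply]
  rw [Coalgebra.rTensor_counit_comul (R := k) a]
  simp [Algebra.linearMap_apply]

lemma XiM_comul (a : H) : XiM (Δ a) = (1 : H) ⊗ₜ[k] a := by
  simp only [XiM, LinearMap.comp_apply, LinearEquiv.coe_coe]
  rw [coassoc_symm_apply, ← LinearMap.comp_apply, ← LinearMap.rTensor_comp,
    LinearMap.comp_assoc, mul_antipode_lTensor_comul, LinearMap.rTensor_comp]
  simp only [LinearMap.comp_apply]
  rw [Coalgebra.rTensor_counit_comul (R := k) a]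
  simp [Algebra.linearMap_apply]

/-- `∑ (S a₁ * a₂) ⊗ a₃ = 1 ⊗ a` -/
lemma collapseL {a : H} (r : Repr k a) (r2 : ∀ i : r.ι, Repr k (r.right i)) :
    ∑ i ∈ r.index, ∑ i' ∈ (r2 i).index,
      (S (r.left i) * (r2 i).left i') ⊗ₜ[k] (r2 i).right i' = (1 : H) ⊗ₜ[k] a := by
  have h : XiL (Δ a) = (1 : H) ⊗ₜ[k] a := XiL_comul a
  rw [← r.eq, map_sum] at h
  rw [← h]
  exact Finset.sum_congr rfl fun i _ => (XiL_tmul _ _ (r2 i)).symm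

/-- `∑ (a₁ * S a₂) ⊗ a₃ = 1 ⊗ a` -/
lemma collapseM {a : H} (r : Repr k a) (r2 : ∀ i : r.ι, Repr k (r.right i)) :
    ∑ i ∈ r.index, ∑ i' ∈ (r2 i).index,
      (r.left i * S ((r2 i).left i')) ⊗ₜ[k] (r2 i).right i' = (1 : H) ⊗ₜ[k] a := by
  have h : XiM (Δ a) = (1 : H) ⊗ₜ[k] a := XiM_comul a
  rw [← r.eq, map_sum] at h
  rw [← h]
  exact Finset.sum_congr rfl fun i _ => (XiM_tmul _ _ (r2 i)).symm


lemma collapseL_map {a : H} (r : Repr k a) (r2 : ∀ i : r.ι, Repr k (r.right i))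
    {W : Type u} [AddCommGroup W] [Module k W] (L : H ⊗[k] H →ₗ[k] W) :
    ∑ i ∈ r.index, ∑ i' ∈ (r2 i).index,
      L ((S (r.left i) * (r2 i).left i') ⊗ₜ[k] (r2 i).right i') = L ((1 : H) ⊗ₜ[k] a) := by
  rw [← collapseL r r2, map_sum]
  exact Finset.sum_congr rfl fun i _ => (map_sum L _ _).symm

/-- the 4-leg middle collapse: `∑ p₁ ⊗ ((p₂ S(p₃)) ⊗ p₄) = ∑ p₁ ⊗ (1 ⊗ p₂)`. -/
lemma midCollapse {p : H} (rp : Repr k p) (rL : ∀ i : rp.ι, Repr k (rp.left i))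
    (rR : ∀ i : rp.ι, Repr k (rp.right i)) :
    ∑ i ∈ rp.index, ∑ i' ∈ (rL i).index, ∑ j' ∈ (rR i).index,
      (rL i).left i' ⊗ₜ[k] ((((rL i).right i') * S ((rR i).left j')) ⊗ₜ[k] (rR i).right j')
    = ∑ i ∈ rp.index, rp.left i ⊗ₜ[k] ((1 : H) ⊗ₜ[k] rp.right i) := by
  -- Θ ((x₁⊗x₂)⊗(y₁⊗y₂)) = x₁ ⊗ ((x₂ * S y₁) ⊗ y₂)
  set ν : H ⊗[k] (H ⊗[k] H) →ₗ[k] H ⊗[k] H :=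
    (LinearMap.rTensor H (μ ∘ₗ LinearMap.lTensor H S)) ∘ₗ
      (TensorProduct.assoc k H H H).symm.toLinearMap with hν
  set Θ : (H ⊗[k] H) ⊗[k] (H ⊗[k] H) →ₗ[k] H ⊗[k] (H ⊗[k] H) :=
    (LinearMap.lTensor H ν) ∘ₗ (TensorProduct.assoc k H H (H ⊗[k] H)).toLinearMap with hΘ
  have hΘt : ∀ (x1 x2 y1 y2 : H),
      Θ ((x1 ⊗ₜ[k] x2) ⊗ₜ[k] (y1 ⊗ₜ[k] y2)) = x1 ⊗ₜ[k] ((x2 * S y1) ⊗ₜ[k] y2) := by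
    intro x1 x2 y1 y2
    simp [hΘ, hν, TensorProduct.assoc_tmul]
  -- step 1 : LHS = Θ (map Δ Δ (Δ p))
  have s1 : ∑ i ∈ rp.index, ∑ i' ∈ (rL i).index, ∑ j' ∈ (rR i).index,
      (rL i).left i' ⊗ₜ[k] ((((rL i).right i') * S ((rR i).left j')) ⊗ₜ[k] (rR i).right j')
      = Θ (TensorProduct.map Δ Δ (Δ p)) := by
    rw [← rp.eq, map_sum, map_sum]
    refine Finset.sum_congr rfl fun i _ => ?_
    rw [TensorProduct.map_tmul, ← (rL i).eq, ← (rR i).eq, sum_tmul]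
    rw [map_sum]
    refine Finset.sum_congr rfl fun i' _ => ?_
    rw [tmul_sum, map_sum]
    exact Finset.sum_congr rfl fun j' _ => (hΘt _ _ _ _)
  -- step 2 : Θ ∘ lTensor Δ = lTensor XiM ∘ assoc
  have s3 : Θ ∘ₗ LinearMap.lTensor (H ⊗[k] H) Δ
      = (LinearMap.lTensor H XiM) ∘ₗ (TensorProduct.assoc k H H H).toLinearMap := by
    apply TensorProduct.ext_threefold
    intro x y z
    simp [hΘ, hν, XiM, TensorProduct.assoc_tmul]
  have s2 : TensorProduct.map Δ Δ (Δ p)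
      = LinearMap.lTensor (H ⊗[k] H) Δ (LinearMap.rTensor H Δ (Δ p)) := by
    rw [← LinearMap.lTensor_comp_rTensor]; rfl
  rw [s1, s2, ← LinearMap.comp_apply, s3]
  simp only [LinearMap.comp_apply, LinearEquiv.coe_coe]
  rw [coassoc_apply]
  rw [← rp.eq]
  simp only [map_sum, LinearMap.lTensor_tmul]
  exact Finset.sum_congr rfl fun i _ => by rw [XiM_comul]

lemma midCollapse_map {p : H} (rp : Repr k p) (rL : ∀ i : rp.ι, Repr k (rp.left i))
    (rR : ∀ i : rp.ι, Repr k (rp.right i))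
    {W : Type u} [AddCommMonoid W] [Module k W] (L : H ⊗[k] (H ⊗[k] H) →ₗ[k] W) :
    ∑ i ∈ rp.index, ∑ i' ∈ (rL i).index, ∑ j' ∈ (rR i).index,
      L ((rL i).left i' ⊗ₜ[k]
        ((((rL i).right i') * S ((rR i).left j')) ⊗ₜ[k] (rR i).right j'))
    = ∑ i ∈ rp.index, L (rp.left i ⊗ₜ[k] ((1 : H) ⊗ₜ[k] rp.right i)) := by
  have h := congrArg L (midCollapse rp rL rR)
  rw [map_sum, map_sum] at h
  rw [← h]
  refine Finset.sum_congr rfl fun i _ => ?_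
  rw [map_sum]
  exact Finset.sum_congr rfl fun i' _ => (map_sum L _ _).symm

theorem antipode_mul (a b : H) : S (a * b) = S b * S a := by
  classical
  set ra := Repr.arbitrary k a
  set rb := Repr.arbitrary k b
  set raa : ∀ i : ra.ι, Repr k (ra.right i) := fun i => Repr.arbitrary k _
  set rbb : ∀ j : rb.ι, Repr k (rb.right j) := fun j => Repr.arbitrary k _
  set E : H := ∑ j ∈ rb.index, ∑ j' ∈ (rbb j).index, ∑ i ∈ ra.index, ∑ i' ∈ (raa i).index,
    S (rb.left j) * S (ra.left i) * ((raa i).left i' * (rbb j).left j') *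
      S ((raa i).right i' * (rbb j).right j') with hE
  have e1 : E = S (a * b) := by
    rw [hE]
    have inner : ∀ j j', (∑ i ∈ ra.index, ∑ i' ∈ (raa i).index,
        S (rb.left j) * S (ra.left i) * ((raa i).left i' * (rbb j).left j') *
          S ((raa i).right i' * (rbb j).right j'))
        = S (rb.left j) * ((1:H) * (rbb j).left j') * S (a * (rbb j).right j') := by
      intro j j'
      set L : H ⊗[k] H →ₗ[k] H := (LinearMap.mulLeft k (S (rb.left j))) ∘ₗ μ ∘ₗ
        TensorProduct.map (LinearMap.mulRight k ((rbb j).left j'))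
          ((HopfAlgebra.antipode (R := k)) ∘ₗ LinearMap.mulRight k ((rbb j).right j')) with hL
      have hLt : ∀ x y : H, L (x ⊗ₜ[k] y)
          = S (rb.left j) * (x * (rbb j).left j') * S (y * (rbb j).right j') := by
        intro x y
        simp [hL, LinearMap.mul'_apply, mul_assoc]
      have := collapseL_map ra raa L
      rw [hLt] at this
      calc (∑ i ∈ ra.index, ∑ i' ∈ (raa i).index,
            S (rb.left j) * S (ra.left i) * ((raa i).left i' * (rbb j).left j') *
              S ((raa i).right i' * (rbb j).right j'))
          = ∑ i ∈ ra.index, ∑ i' ∈ (raa i).index,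
            L ((S (ra.left i) * (raa i).left i') ⊗ₜ[k] (raa i).right i') := by
            refine Finset.sum_congr rfl fun i _ => Finset.sum_congr rfl fun i' _ => ?_
            rw [hLt]; simp only [mul_assoc]
        _ = L ((1:H) ⊗ₜ[k] a) := collapseL_map ra raa L
        _ = _ := by rw [hLt]
    calc E = ∑ j ∈ rb.index, ∑ j' ∈ (rbb j).index,
          S (rb.left j) * ((1:H) * (rbb j).left j') * S (a * (rbb j).right j') := by
          rw [hE]; exact Finset.sum_congr rfl fun j _ =>
            Finset.sum_congr rfl fun j' _ => inner j j'
      _ = S (a * b) := by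
          set M : H ⊗[k] H →ₗ[k] H := μ ∘ₗ TensorProduct.map LinearMap.id
            ((HopfAlgebra.antipode (R := k)) ∘ₗ LinearMap.mulLeft k a) with hM
          have hMt : ∀ x y : H, M (x ⊗ₜ[k] y) = x * S (a * y) := by
            intro x y; simp [hM, LinearMap.mul'_apply]
          calc ∑ j ∈ rb.index, ∑ j' ∈ (rbb j).index,
                S (rb.left j) * ((1:H) * (rbb j).left j') * S (a * (rbb j).right j')
              = ∑ j ∈ rb.index, ∑ j' ∈ (rbb j).index,
                M ((S (rb.left j) * (rbb j).left j') ⊗ₜ[k] (rbb j).right j') := by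
                refine Finset.sum_congr rfl fun j _ => Finset.sum_congr rfl fun j' _ => ?_
                rw [hMt, one_mul]
            _ = M ((1:H) ⊗ₜ[k] b) := collapseL_map rb rbb M
            _ = S (a * b) := by rw [hMt, one_mul]
  have e2 : E = S b * S a := by
    rw [hE]
    have inner2 : ∀ j i, (∑ j' ∈ (rbb j).index, ∑ i' ∈ (raa i).index,
        S (rb.left j) * S (ra.left i) * ((raa i).left i' * (rbb j).left j') *
          S ((raa i).right i' * (rbb j).right j'))
        = (ε (ra.right i) * ε (rb.right j)) • (S (rb.left j) * S (ra.left i)) := by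
      intro j i
      have hsum : ∑ p ∈ (Repr.mul (raa i) (rbb j)).index,
          (Repr.mul (raa i) (rbb j)).left p * S ((Repr.mul (raa i) (rbb j)).right p)
          = algebraMap k H (ε (ra.right i * rb.right j)) :=
        HopfAlgebra.sum_mul_antipode_eq_algebraMap_counit
          (⟨_, _, _, (Repr.mul (raa i) (rbb j)).eq⟩ : Coalgebra.Repr k _ _)
      simp only [Repr.mul] at hsum
      rw [Finset.sum_product] at hsum
      calc (∑ j' ∈ (rbb j).index, ∑ i' ∈ (raa i).index,
            S (rb.left j) * S (ra.left i) * ((raa i).left i' * (rbb j).left j') *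
              S ((raa i).right i' * (rbb j).right j'))
          = S (rb.left j) * S (ra.left i) *
            (∑ i' ∈ (raa i).index, ∑ j' ∈ (rbb j).index,
              ((raa i).left i' * (rbb j).left j') * S ((raa i).right i' * (rbb j).right j')) := by
            rw [Finset.mul_sum, Finset.sum_comm]
            exact Finset.sum_congr rfl fun j' _ => by
              rw [Finset.mul_sum]
              exact Finset.sum_congr rfl fun i' _ => by rw [mul_assoc]
        _ = S (rb.left j) * S (ra.left i) * algebraMap k H (ε (ra.right i * rb.right j)) := by
            rw [← hsum]
        _ = (ε (ra.right i) * ε (rb.right j)) • (S (rb.left j) * S (ra.left i)) := by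
            rw [Bialgebra.counit_mul, ← Algebra.commutes, ← Algebra.smul_def]
    calc E = ∑ j ∈ rb.index, ∑ i ∈ ra.index,
          (ε (ra.right i) * ε (rb.right j)) • (S (rb.left j) * S (ra.left i)) := by
          rw [hE]
          refine Finset.sum_congr rfl fun j _ => ?_
          rw [Finset.sum_comm]
          exact Finset.sum_congr rfl fun i _ => inner2 j i
      _ = (∑ j ∈ rb.index, ε (rb.right j) • S (rb.left j)) *
          (∑ i ∈ ra.index, ε (ra.right i) • S (ra.left i)) := by
          rw [Finset.sum_mul_sum]
          refine Finset.sum_congr rfl fun j _ => Finset.sum_congr rfl fun i _ => ?_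
          rw [smul_mul_assoc, mul_smul_comm, smul_smul,
            mul_comm (ε (rb.right j)) (ε (ra.right i))]
      _ = S b * S a := by
          have hb' : (∑ j ∈ rb.index, ε (rb.right j) • S (rb.left j)) = S b := by
            simpa [map_sum, map_smul] using
              congrArg (HopfAlgebra.antipode (R := k) (A := H)) (sum_smul_counit rb)
          have ha' : (∑ i ∈ ra.index, ε (ra.right i) • S (ra.left i)) = S a := by
            simpa [map_sum, map_smul] using
              congrArg (HopfAlgebra.antipode (R := k) (A := H)) (sum_smul_counit ra)
          rw [hb', ha']
  rw [← e1, e2]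

end Aux

set_option synthInstance.maxHeartbeats 1000000
set_option maxHeartbeats 1000000
open TensorProduct Coalgebra HopfAlgebra LinearMap

namespace Aux
variable {k : Type u} [Field k] {H : Type u} [Ring H] [HopfAlgebra k H]

local notation "S" => (HopfAlgebra.antipode (R := k) (A := H))
local notation "Δ" => (Coalgebra.comul (R := k) (A := H))
local notation "ε" => (Coalgebra.counit (R := k) (A := H))
local notation "μ" => (LinearMap.mul' k H)

/-- `Fm (((a⊗t)⊗c) ⊗ (x⊗y)) = (a⊗(t⊗(c*x)))⊗y` : the build step of `Jmap`. -/
noncomputable def Fm (n : ℕ) :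
    ((H ⊗[k] (Tq k H n : Type u)) ⊗[k] H) ⊗[k] (H ⊗[k] H) →ₗ[k]
      (H ⊗[k] (Tq k H (n + 1) : Type u)) ⊗[k] H :=
  (LinearMap.rTensor H
      (((TensorProduct.assoc k H (Tq k H n) H).toLinearMap).comp
        ((LinearMap.lTensor (H ⊗[k] (Tq k H n : Type u)) μ).comp
          (TensorProduct.assoc k (H ⊗[k] (Tq k H n : Type u)) H H).toLinearMap))) ∘ₗ
    (TensorProduct.assoc k ((H ⊗[k] (Tq k H n : Type u)) ⊗[k] H) H H).symm.toLinearMap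

lemma Jmap_succ (n : ℕ) (z : (Tq k H (n + 1) : Type u)) (g : H) :
    Jmap k H (n + 1) (z ⊗ₜ[k] g)
      = Fm n ((Jmap k H n z) ⊗ₜ[k] (LinearMap.rTensor H S (Δ g))) := by
  rfl

lemma Fm_tmul (n : ℕ) (a : H) (t : (Tq k H n : Type u)) (c x y : H) :
    Fm n (((a ⊗ₜ[k] t) ⊗ₜ[k] c) ⊗ₜ[k] (x ⊗ₜ[k] y))
      = (a ⊗ₜ[k] (t ⊗ₜ[k] (c * x))) ⊗ₜ[k] y := rfl

/-- the wrapping map `(((a⊗t)⊗c)⊗h) ↦ (c*h*a)⊗t`. -/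
noncomputable def Wr (n : ℕ) :
    (((H ⊗[k] (Tq k H n : Type u)) ⊗[k] H) ⊗[k] H) →ₗ[k] H ⊗[k] (Tq k H n : Type u) :=
  (LinearMap.rTensor (Tq k H n) μ) ∘ₗ
    ((TensorProduct.assoc k H H (Tq k H n)).symm.toLinearMap) ∘ₗ
    (TensorProduct.comm k (H ⊗[k] (Tq k H n : Type u)) H).toLinearMap ∘ₗ
    (LinearMap.lTensor (H ⊗[k] (Tq k H n : Type u)) μ) ∘ₗ
    (TensorProduct.assoc k (H ⊗[k] (Tq k H n : Type u)) H H).toLinearMap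

lemma psiRep_apply (n : ℕ) (z : (Tq k H (n + 1) : Type u)) (h : H) :
    psiRep k H n (z ⊗ₜ[k] h) = Wr n ((Jmap k H n z) ⊗ₜ[k] h) := by
  rfl

lemma Wr_tmul (n : ℕ) (a : H) (t : (Tq k H n : Type u)) (c h : H) :
    Wr n (((a ⊗ₜ[k] t) ⊗ₜ[k] c) ⊗ₜ[k] h) = (c * h * a) ⊗ₜ[k] t := rfl

/-- `Psi0 s (x ⊗ y) = (x ⊗ s) ⊗ y`. -/
noncomputable def Psi0 (s : (Tq k H 0 : Type u)) :
    H ⊗[k] H →ₗ[k] (H ⊗[k] (Tq k H 0 : Type u)) ⊗[k] H :=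
  LinearMap.rTensor H ((TensorProduct.mk k H (Tq k H 0 : Type u)).flip s)

lemma Psi0_tmul (s : (Tq k H 0 : Type u)) (x y : H) :
    Psi0 s (x ⊗ₜ[k] y) = (x ⊗ₜ[k] s) ⊗ₜ[k] y := rfl

lemma Jmap_zero_eq (s : (Tq k H 0 : Type u)) (c : H) :
    Jmap k H 0 (s ⊗ₜ[k] c) = Psi0 s (LinearMap.rTensor H S (Δ c)) := by
  have h : ∀ w : H ⊗[k] H,
      (LinearMap.rTensor H (TensorProduct.comm k (Tq k H 0 : Type u) H).toLinearMap)
        ((TensorProduct.assoc k (Tq k H 0 : Type u) H H).symm.toLinearMap (s ⊗ₜ[k] w))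
      = Psi0 s w := by
    intro w
    induction w using TensorProduct.induction_on with
    | zero => simp
    | tmul x y => rfl
    | add u v hu hv => rw [tmul_add, map_add, map_add, hu, hv, map_add]
  exact h (LinearMap.rTensor H S (Δ c))

lemma Jmap_zero_tmul (s : (Tq k H 0 : Type u)) (c : H) (rc : Repr k c) :
    Jmap k H 0 (s ⊗ₜ[k] c)
      = ∑ i ∈ rc.index, (S (rc.left i) ⊗ₜ[k] s) ⊗ₜ[k] rc.right i := by
  rw [Jmap_zero_eq, ← rc.eq, map_sum, map_sum]
  rfl

/-- `Gp (((a⊗t)⊗c) ⊗ (x⊗y)) = ((S x * a)⊗t)⊗(c*y)`. -/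
noncomputable def Gp (n : ℕ) :
    ((H ⊗[k] (Tq k H n : Type u)) ⊗[k] H) ⊗[k] (H ⊗[k] H) →ₗ[k]
      (H ⊗[k] (Tq k H n : Type u)) ⊗[k] H :=
  (TensorProduct.map
      ((LinearMap.rTensor (Tq k H n) (μ ∘ₗ LinearMap.rTensor H S)) ∘ₗ
        (TensorProduct.assoc k H H (Tq k H n)).symm.toLinearMap ∘ₗ
        (TensorProduct.comm k (H ⊗[k] (Tq k H n : Type u)) H).toLinearMap)
      μ) ∘ₗ
    (TensorProduct.tensorTensorTensorComm k (H ⊗[k] (Tq k H n : Type u)) H H H).toLinearMap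

lemma Gp_tmul (n : ℕ) (a : H) (t : (Tq k H n : Type u)) (c x y : H) :
    Gp n (((a ⊗ₜ[k] t) ⊗ₜ[k] c) ⊗ₜ[k] (x ⊗ₜ[k] y))
      = ((S x * a) ⊗ₜ[k] t) ⊗ₜ[k] (c * y) := rfl

lemma qdiag_zero (act : H ⊗[k] H →ₗ[k] H) (s : (Tq k H 0 : Type u)) (x : H) :
    qdiag k H act 0 (s ⊗ₜ[k] x) = ε x • s := by
  have : qdiag k H act 0 (s ⊗ₜ[k] x)
      = TensorProduct.lid k k ((LinearMap.lTensor k (Coalgebra.counit (R := k))) (s ⊗ₜ[k] x)) := rfl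
  rw [this]
  exact mul_comm (show k from s) (ε x)

lemma qdiag_succ (act : H ⊗[k] H →ₗ[k] H) (n : ℕ) (w : (Tq k H n : Type u)) (m : H)
    (p : H) (rp : Repr k p) :
    qdiag k H act (n + 1) ((w ⊗ₜ[k] m) ⊗ₜ[k] p)
      = ∑ i ∈ rp.index, qdiag k H act n (w ⊗ₜ[k] rp.left i) ⊗ₜ[k] act (m ⊗ₜ[k] rp.right i) := by
  have : qdiag k H act (n+1) ((w ⊗ₜ[k] m) ⊗ₜ[k] p)
      = (TensorProduct.map (qdiag k H act n) act)
          ((TensorProduct.tensorTensorTensorComm k (Tq k H n) H H H)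
            ((w ⊗ₜ[k] m) ⊗ₜ[k] (Δ p))) := rfl
  rw [this, ← rp.eq, tmul_sum, map_sum, map_sum]
  refine Finset.sum_congr rfl fun i _ => ?_
  rw [tensorTensorTensorComm_tmul, TensorProduct.map_tmul]

lemma adAct_tmul (p h : H) (rp : Repr k p) :
    adAct k H (p ⊗ₜ[k] h) = ∑ i ∈ rp.index, rp.right i * h * S (rp.left i) := by
  simp only [adAct, LinearMap.comp_apply, LinearMap.rTensor_tmul]
  rw [← rp.eq]

  simp only [sum_tmul, map_sum]
  refine Finset.sum_congr rfl fun i _ => ?_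
  rfl

variable (I : Submodule k H)

lemma canTilde_tmul (x y : H) (ry : Repr k y) :
    canTilde k H I (x ⊗ₜ[k] y)
      = ∑ i ∈ ry.index, (x * ry.left i) ⊗ₜ[k] I.mkQ (ry.right i) := by
  simp only [canTilde, LinearMap.comp_apply, LinearMap.lTensor_tmul]
  rw [← ry.eq]
  simp only [map_sum, LinearMap.lTensor_tmul, tmul_sum]
  refine Finset.sum_congr rfl fun i _ => ?_
  rfl

lemma canTilde_T (g : H) :
    canTilde k H I (LinearMap.rTensor H S (Δ g)) = (1 : H) ⊗ₜ[k] I.mkQ g := by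
  classical
  set rg := Repr.arbitrary k g
  set rgg : ∀ i : rg.ι, Repr k (rg.right i) := fun i => Repr.arbitrary k _
  have step1 : canTilde k H I (LinearMap.rTensor H S (Δ g))
      = ∑ i ∈ rg.index, ∑ j ∈ (rgg i).index,
          (LinearMap.lTensor H I.mkQ)
            ((S (rg.left i) * (rgg i).left j) ⊗ₜ[k] (rgg i).right j) := by
    rw [← rg.eq, map_sum, map_sum]
    refine Finset.sum_congr rfl fun i _ => ?_
    rw [LinearMap.rTensor_tmul, canTilde_tmul _ _ _ (rgg i)]
    exact Finset.sum_congr rfl fun j _ => by rw [LinearMap.lTensor_tmul]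
  rw [step1, collapseL_map rg rgg (LinearMap.lTensor H I.mkQ), LinearMap.lTensor_tmul]

lemma T_mem_relB (hGal : IsGaloisExtension k H I) {g : H} (hg : g ∈ I) :
    LinearMap.rTensor H S (Δ g) ∈ relB k H I := by
  obtain ⟨e, he⟩ := hGal
  have h0 : canTilde k H I (LinearMap.rTensor H S (Δ g)) = 0 := by
    rw [canTilde_T, Submodule.mkQ_apply, (Submodule.Quotient.mk_eq_zero I).mpr hg, tmul_zero]
  have h1 : e (Submodule.Quotient.mk (LinearMap.rTensor H S (Δ g))) = e 0 := by
    rw [he, h0, map_zero]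
  have h2 := e.injective h1
  exact (Submodule.Quotient.mk_eq_zero _).mp h2

end Aux

set_option synthInstance.maxHeartbeats 1000000
set_option maxHeartbeats 1000000
open TensorProduct Coalgebra HopfAlgebra LinearMap

namespace Aux
variable {k : Type u} [Field k] {H : Type u} [Ring H] [HopfAlgebra k H]

local notation "S" => (HopfAlgebra.antipode (R := k) (A := H))
local notation "Δ" => (Coalgebra.comul (R := k) (A := H))
local notation "ε" => (Coalgebra.counit (R := k) (A := H))
local notation "μ" => (LinearMap.mul' k H)

lemma qdiag_one_mul (s : (Tq k H 0 : Type u)) (g p : H) :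
    qdiag k H μ 1 ((s ⊗ₜ[k] g) ⊗ₜ[k] p) = s ⊗ₜ[k] (g * p) := by
  classical
  set rp := Repr.arbitrary k p
  rw [qdiag_succ μ 0 s g p rp]
  have : ∀ i ∈ rp.index,
      qdiag k H μ 0 (s ⊗ₜ[k] rp.left i) ⊗ₜ[k] μ (g ⊗ₜ[k] rp.right i)
        = s ⊗ₜ[k] (g * (ε (rp.left i) • rp.right i)) := by
    intro i _
    rw [qdiag_zero, LinearMap.mul'_apply, smul_tmul, mul_smul_comm]
  rw [Finset.sum_congr rfl this]
  rw [← tmul_sum, ← Finset.mul_sum, sum_counit_smul rp]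

/-- `Λ (x ⊗ (y ⊗ z)) = ((S x * a) ⊗ (t ⊗ (c * y * S gl))) ⊗ (gr * z)`. -/
noncomputable def LamJ (n : ℕ) (a : H) (t : (Tq k H n : Type u)) (c gl gr : H) :
    H ⊗[k] (H ⊗[k] H) →ₗ[k] (H ⊗[k] (Tq k H (n + 1) : Type u)) ⊗[k] H :=
  (TensorProduct.assoc k H (Tq k H (n + 1) : Type u) H).symm.toLinearMap ∘ₗ
    TensorProduct.map ((LinearMap.mulRight k a) ∘ₗ (HopfAlgebra.antipode (R := k)))
      (TensorProduct.map
        ((TensorProduct.mk k (Tq k H n : Type u) H t) ∘ₗ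
          (LinearMap.mulRight k (S gl)) ∘ₗ (LinearMap.mulLeft k c))
        (LinearMap.mulLeft k gr))

lemma LamJ_tmul (n : ℕ) (a : H) (t : (Tq k H n : Type u)) (c gl gr x y z : H) :
    LamJ n a t c gl gr (x ⊗ₜ[k] (y ⊗ₜ[k] z))
      = ((S x * a) ⊗ₜ[k] (t ⊗ₜ[k] (c * y * S gl))) ⊗ₜ[k] (gr * z) := rfl

/-- the combinatorial core of the `⊗_H`-balancedness. -/
lemma keyJD (n : ℕ) (J : (H ⊗[k] (Tq k H n : Type u)) ⊗[k] H) (g p : H) (rp : Repr k p) :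
    ∑ i ∈ rp.index,
      Fm n ((Gp n (J ⊗ₜ[k] Δ (rp.left i))) ⊗ₜ[k]
        (LinearMap.rTensor H S (Δ (g * rp.right i))))
    = Gp (n + 1) ((Fm n (J ⊗ₜ[k] LinearMap.rTensor H S (Δ g))) ⊗ₜ[k] Δ p) := by
  classical
  induction J using TensorProduct.induction_on with
  | zero => simp
  | add u v hu hv =>
      simp only [add_tmul, map_add, tmul_add] at *
      rw [← hu, ← hv, ← Finset.sum_add_distrib]
  | tmul Y c =>
      induction Y using TensorProduct.induction_on with
      | zero => simp [zero_tmul]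
      | add u v hu hv =>
          simp only [add_tmul, map_add, tmul_add] at *
          rw [← hu, ← hv, ← Finset.sum_add_distrib]
      | tmul a t =>
          set rg := Repr.arbitrary k g
          set rL : ∀ i : rp.ι, Repr k (rp.left i) := fun i => Repr.arbitrary k _
          set rR : ∀ i : rp.ι, Repr k (rp.right i) := fun i => Repr.arbitrary k _
          -- expand the left side
          have lhs_i : ∀ i ∈ rp.index,
              Fm n ((Gp n (((a ⊗ₜ[k] t) ⊗ₜ[k] c) ⊗ₜ[k] Δ (rp.left i))) ⊗ₜ[k]
                (LinearMap.rTensor H S (Δ (g * rp.right i))))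
              = ∑ j ∈ rg.index, ∑ j' ∈ (rR i).index, ∑ i' ∈ (rL i).index,
                  LamJ n a t c (rg.left j) (rg.right j)
                    ((rL i).left i' ⊗ₜ[k]
                      ((((rL i).right i') * S ((rR i).left j')) ⊗ₜ[k] (rR i).right j')) := by
            intro i _
            rw [← (rL i).eq, ← (Repr.mul rg (rR i)).eq]
            simp only [map_sum, sum_tmul, tmul_sum, LinearMap.rTensor_tmul]
            simp only [Repr.mul, Finset.sum_product]
            refine Finset.sum_congr rfl fun j _ => ?_
            refine Finset.sum_congr rfl fun j' _ => Finset.sum_congr rfl fun i' _ => ?_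
            rw [Gp_tmul, Fm_tmul, LamJ_tmul, antipode_mul]
            simp only [mul_assoc]
            rfl
          rw [Finset.sum_congr rfl lhs_i]
          rw [show (∑ i ∈ rp.index, ∑ j ∈ rg.index, ∑ j' ∈ (rR i).index, ∑ i' ∈ (rL i).index,
                  LamJ n a t c (rg.left j) (rg.right j)
                    ((rL i).left i' ⊗ₜ[k]
                      ((((rL i).right i') * S ((rR i).left j')) ⊗ₜ[k] (rR i).right j')))
              = ∑ j ∈ rg.index, ∑ i ∈ rp.index, ∑ i' ∈ (rL i).index, ∑ j' ∈ (rR i).index,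
                  LamJ n a t c (rg.left j) (rg.right j)
                    ((rL i).left i' ⊗ₜ[k]
                      ((((rL i).right i') * S ((rR i).left j')) ⊗ₜ[k] (rR i).right j'))
            from by
              rw [Finset.sum_comm]
              exact Finset.sum_congr rfl fun j _ => Finset.sum_congr rfl fun i _ =>
                Finset.sum_comm]
          -- collapse the middle legs
          have collapse : ∀ j ∈ rg.index,
              (∑ i ∈ rp.index, ∑ i' ∈ (rL i).index, ∑ j' ∈ (rR i).index,
                LamJ n a t c (rg.left j) (rg.right j)
                  ((rL i).left i' ⊗ₜ[k]
                    ((((rL i).right i') * S ((rR i).left j')) ⊗ₜ[k] (rR i).right j')))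
              = ∑ i ∈ rp.index,
                  ((S (rp.left i) * a) ⊗ₜ[k] (t ⊗ₜ[k] (c * S (rg.left j)))) ⊗ₜ[k]
                    (rg.right j * rp.right i) := by
            intro j _
            rw [midCollapse_map rp rL rR (LamJ n a t c (rg.left j) (rg.right j))]
            refine Finset.sum_congr rfl fun i _ => ?_
            rw [LamJ_tmul, mul_one]
          rw [Finset.sum_congr rfl collapse]
          -- expand the right side
          rw [← rg.eq]
          simp only [map_sum, sum_tmul, LinearMap.rTensor_tmul, tmul_sum]
          refine Finset.sum_congr rfl fun j _ => ?_
          rw [Fm_tmul, ← rp.eq]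
          erw [tmul_sum, map_sum]
          refine Finset.sum_congr rfl fun i _ => ?_
          exact (Gp_tmul (n + 1) a (t ⊗ₜ[k] (c * S (rg.left j))) (rg.right j)
            (rp.left i) (rp.right i)).symm

/-- induction on `Tq k H (n + 1)` with the terms typed in `Tq k H (n + 1)`. -/
theorem Tq_ind {n : ℕ} {motive : (Tq k H (n + 1) : Type u) → Prop}
    (x : (Tq k H (n + 1) : Type u)) (zero : motive 0)
    (tmul : ∀ (s : (Tq k H n : Type u)) (g : H), motive (s ⊗ₜ[k] g))
    (add : ∀ u v, motive u → motive v → motive (u + v)) : motive x :=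
  TensorProduct.induction_on (M := (Tq k H n : Type u)) (N := H) x zero tmul add

/-- `Jmap` intertwines the diagonal action with `Gp`. -/
lemma JD : ∀ (n : ℕ) (v : (Tq k H (n + 1) : Type u)) (p : H),
    Jmap k H n (qdiag k H μ (n + 1) (v ⊗ₜ[k] p))
      = Gp n ((Jmap k H n v) ⊗ₜ[k] Δ p)
  | 0, v, p => by
      induction v using Tq_ind with
      | zero => simp [zero_tmul]
      | add u v hu hv => simp only [add_tmul, map_add, tmul_add] at *; rw [hu, hv]
      | tmul s g =>
          classical
          set rp := Repr.arbitrary k p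
          set rg := Repr.arbitrary k g
          rw [qdiag_one_mul, Jmap_zero_tmul _ _ (Repr.mul rg rp),
            Jmap_zero_tmul _ _ rg, ← rp.eq]
          simp only [Repr.mul, Finset.sum_product, sum_tmul, tmul_sum, map_sum]
          rw [Finset.sum_comm]
          refine Finset.sum_congr rfl fun i _ => Finset.sum_congr rfl fun j _ => ?_
          rw [Gp_tmul, antipode_mul]
  | (n + 1), v, p => by
      induction v using Tq_ind with
      | zero => simp [zero_tmul]
      | add u v hu hv => simp only [add_tmul, map_add, tmul_add] at *; rw [hu, hv]
      | tmul w g =>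
          classical
          set rp := Repr.arbitrary k p
          rw [qdiag_succ μ (n + 1) w g p rp]
          erw [map_sum]
          have step : ∀ i ∈ rp.index,
              Jmap k H (n + 1)
                (qdiag k H μ (n + 1) (w ⊗ₜ[k] rp.left i) ⊗ₜ[k] μ (g ⊗ₜ[k] rp.right i))
              = Fm n ((Gp n ((Jmap k H n w) ⊗ₜ[k] Δ (rp.left i))) ⊗ₜ[k]
                  (LinearMap.rTensor H S (Δ (g * rp.right i)))) := by
            intro i _
            rw [LinearMap.mul'_apply, Jmap_succ, JD n (w) (rp.left i)]
          rw [Finset.sum_congr rfl step, keyJD n (Jmap k H n w) g p rp, ← Jmap_succ]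

end Aux

set_option synthInstance.maxHeartbeats 1000000
set_option maxHeartbeats 1000000
open TensorProduct Coalgebra HopfAlgebra LinearMap

namespace Aux
variable {k : Type u} [Field k] {H : Type u} [Ring H] [HopfAlgebra k H]

local notation "S" => (HopfAlgebra.antipode (R := k) (A := H))
local notation "Δ" => (Coalgebra.comul (R := k) (A := H))
local notation "μ" => (LinearMap.mul' k H)

lemma posR_zero (b : H) (n : ℕ) : posR k H b n 0
    = LinearMap.rTensor (Tq k H n : Type u) (LinearMap.mulRight k b) := by
  simp [posR]

lemma posL_zero (b : H) (n : ℕ) : posL k H b n 0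
    = LinearMap.rTensor (Tq k H n : Type u) (LinearMap.mulLeft k b) := by
  simp [posL]

lemma posR_succ (b : H) (n j : ℕ) : posR k H b n (j + 1)
    = LinearMap.lTensor H (qmulR k H b n j) := by
  simp [posR]

lemma posL_succ (b : H) (n j : ℕ) : posL k H b n (j + 1)
    = LinearMap.lTensor H (qmulL k H b n j) := by
  simp [posL]

lemma qmulR_last (b : H) (n : ℕ) :
    qmulR k H b (n + 1) n = LinearMap.lTensor (Tq k H n : Type u) (LinearMap.mulRight k b) := by
  simp [qmulR]
  rfl

lemma qmulR_lt (b : H) (n j : ℕ) (h : j ≠ n) :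
    qmulR k H b (n + 1) j = LinearMap.rTensor H (qmulR k H b n j) := by
  simp [qmulR, h]
  rfl

lemma qmulL_last (b : H) (n : ℕ) :
    qmulL k H b (n + 1) n = LinearMap.lTensor (Tq k H n : Type u) (LinearMap.mulLeft k b) := by
  simp [qmulL]
  rfl

lemma qmulL_lt (b : H) (n j : ℕ) (h : j ≠ n) :
    qmulL k H b (n + 1) j = LinearMap.rTensor H (qmulL k H b n j) := by
  simp [qmulL, h]
  rfl

/-- `Wr` commutes with right multiplication at any slot. -/
lemma Wr_posR (n : ℕ) (b : H) (j : ℕ)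
    (W : (H ⊗[k] (Tq k H n : Type u)) ⊗[k] H) (h : H) :
    Wr n ((LinearMap.rTensor H (posR k H b n j) W) ⊗ₜ[k] h)
      = posR k H b n j (Wr n (W ⊗ₜ[k] h)) := by
  induction W using TensorProduct.induction_on with
  | zero => simp
  | add u v hu hv => simp only [map_add, add_tmul, hu, hv]
  | tmul Y c =>
      induction Y using TensorProduct.induction_on with
      | zero => simp [zero_tmul]
      | add u v hu hv => simp only [map_add, add_tmul, hu, hv]
      | tmul a t =>
          cases j with
          | zero =>
              rw [posR_zero]
              have e1 : (LinearMap.rTensor (Tq k H n : Type u) (LinearMap.mulRight k b))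
                  (a ⊗ₜ[k] t) = (a * b) ⊗ₜ[k] t := rfl
              have e2 : (LinearMap.rTensor H
                  (LinearMap.rTensor (Tq k H n : Type u) (LinearMap.mulRight k b)))
                  ((a ⊗ₜ[k] t) ⊗ₜ[k] c)
                  = ((a * b) ⊗ₜ[k] t) ⊗ₜ[k] c := rfl
              rw [e2, Wr_tmul, Wr_tmul]
              have e3 : (LinearMap.rTensor (Tq k H n : Type u) (LinearMap.mulRight k b))
                  ((c * h * a) ⊗ₜ[k] t) = (c * h * a * b) ⊗ₜ[k] t := rfl
              rw [e3, mul_assoc (c * h) a b]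
          | succ m =>
              rw [posR_succ]
              have e2 : (LinearMap.rTensor H
                  (LinearMap.lTensor H (qmulR k H b n m))) ((a ⊗ₜ[k] t) ⊗ₜ[k] c)
                  = (a ⊗ₜ[k] (qmulR k H b n m t)) ⊗ₜ[k] c := rfl
              rw [e2, Wr_tmul, Wr_tmul]
              rfl

lemma Wr_posL_succ (n : ℕ) (b : H) (j : ℕ)
    (W : (H ⊗[k] (Tq k H n : Type u)) ⊗[k] H) (h : H) :
    Wr n ((LinearMap.rTensor H (posL k H b n (j + 1)) W) ⊗ₜ[k] h)
      = posL k H b n (j + 1) (Wr n (W ⊗ₜ[k] h)) := by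
  induction W using TensorProduct.induction_on with
  | zero => simp
  | add u v hu hv => simp only [map_add, add_tmul, hu, hv]
  | tmul Y c =>
      induction Y using TensorProduct.induction_on with
      | zero => simp [zero_tmul]
      | add u v hu hv => simp only [map_add, add_tmul, hu, hv]
      | tmul a t =>
          rw [posL_succ]
          have e2 : (LinearMap.rTensor H
              (LinearMap.lTensor H (qmulL k H b n j))) ((a ⊗ₜ[k] t) ⊗ₜ[k] c)
              = (a ⊗ₜ[k] (qmulL k H b n j t)) ⊗ₜ[k] c := rfl
          rw [e2, Wr_tmul, Wr_tmul]
          rfl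

lemma Wr_mulLeft (n : ℕ) (b : H)
    (W : (H ⊗[k] (Tq k H n : Type u)) ⊗[k] H) (h : H) :
    Wr n ((LinearMap.lTensor (H ⊗[k] (Tq k H n : Type u)) (LinearMap.mulLeft k b) W) ⊗ₜ[k] h)
      = posL k H b n 0 (Wr n (W ⊗ₜ[k] h)) := by
  induction W using TensorProduct.induction_on with
  | zero => simp
  | add u v hu hv => simp only [map_add, add_tmul, hu, hv]
  | tmul Y c =>
      induction Y using TensorProduct.induction_on with
      | zero => simp [zero_tmul]
      | add u v hu hv => simp only [map_add, add_tmul, hu, hv]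
      | tmul a t =>
          rw [posL_zero]
          have e2 : (LinearMap.lTensor (H ⊗[k] (Tq k H n : Type u)) (LinearMap.mulLeft k b))
              ((a ⊗ₜ[k] t) ⊗ₜ[k] c) = (a ⊗ₜ[k] t) ⊗ₜ[k] (b * c) := rfl
          rw [e2, Wr_tmul, Wr_tmul]
          have e3 : (LinearMap.rTensor (Tq k H n : Type u) (LinearMap.mulLeft k b))
              ((c * h * a) ⊗ₜ[k] t) = (b * (c * h * a)) ⊗ₜ[k] t := rfl
          rw [e3]
          simp only [mul_assoc]

variable (I : Submodule k H)

/-- the additive group structure on `(H ⊗ H^{⊗n}) ⊗ H`, made available to instance search. -/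
instance instACGTq (n : ℕ) : AddCommGroup ((H ⊗[k] (Tq k H n : Type u)) ⊗[k] H) :=
  TensorProduct.addCommGroup

/-- generators of the subspace `W n` of `(H ⊗ H^{⊗n}) ⊗ H`. -/
def Wgen (n : ℕ) : Set ((H ⊗[k] (Tq k H n : Type u)) ⊗[k] H) :=
  {x | ∃ (b : H) (v : H ⊗[k] (Tq k H n : Type u)) (c : H) (j : ℕ),
      IsCoinvariant k H I b ∧ j + 1 ≤ n ∧
      x = (posR k H b n j v - posL k H b n (j + 1) v) ⊗ₜ[k] c} ∪
  {x | ∃ (b : H) (v : H ⊗[k] (Tq k H n : Type u)) (c : H),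
      IsCoinvariant k H I b ∧
      x = (posR k H b n n v) ⊗ₜ[k] c - v ⊗ₜ[k] (b * c)}

def Wsub (n : ℕ) : Submodule k ((H ⊗[k] (Tq k H n : Type u)) ⊗[k] H) :=
  Submodule.span k (Wgen I n)

lemma memCyc (n : ℕ) {b : H} (hb : IsCoinvariant k H I b) (j : ℕ) (hj : j ≤ n)
    (V : H ⊗[k] (Tq k H n : Type u)) :
    posR k H b n j V - posL k H b n ((j + 1) % (n + 1)) V ∈ relCyc k H I n :=
  Submodule.subset_span ⟨b, V, ⟨j, Nat.lt_succ_of_le hj⟩, hb, rfl⟩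

/-- wrapping sends `W n ⊗ h` into the cyclic relations. -/
lemma wrapW (n : ℕ) (h : H) {w : (H ⊗[k] (Tq k H n : Type u)) ⊗[k] H}
    (hw : w ∈ Wsub I n) : Wr n (w ⊗ₜ[k] h) ∈ relCyc k H I n := by
  set F : ((H ⊗[k] (Tq k H n : Type u)) ⊗[k] H) →ₗ[k] H ⊗[k] (Tq k H n : Type u) :=
    Wr n ∘ₗ (TensorProduct.mk k ((H ⊗[k] (Tq k H n : Type u)) ⊗[k] H) H).flip h with hF
  have hFa : ∀ w', F w' = Wr n (w' ⊗ₜ[k] h) := fun w' => rfl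
  have main : Wsub I n ≤ Submodule.comap F (relCyc k H I n) := by
    rw [Wsub, Submodule.span_le]
    rintro x (⟨b, v, c, j, hb, hj, rfl⟩ | ⟨b, v, c, hb, rfl⟩)
    · refine Submodule.mem_comap.mpr ?_
      have key : F ((posR k H b n j v - posL k H b n (j + 1) v) ⊗ₜ[k] c)
          = posR k H b n j (Wr n ((v ⊗ₜ[k] c) ⊗ₜ[k] h))
            - posL k H b n (j + 1) (Wr n ((v ⊗ₜ[k] c) ⊗ₜ[k] h)) := by
        rw [hFa, sub_tmul, sub_tmul, map_sub]
        have r1 : (posR k H b n j v) ⊗ₜ[k] c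
            = LinearMap.rTensor H (posR k H b n j) (v ⊗ₜ[k] c) := rfl
        have r2 : (posL k H b n (j + 1) v) ⊗ₜ[k] c
            = LinearMap.rTensor H (posL k H b n (j + 1)) (v ⊗ₜ[k] c) := rfl
        rw [r1, r2, Wr_posR, Wr_posL_succ]
      rw [key]
      have hmod : (j + 1) % (n + 1) = j + 1 := Nat.mod_eq_of_lt (Nat.lt_succ_of_le hj)
      have := memCyc I n hb j (Nat.le_of_succ_le hj) (Wr n ((v ⊗ₜ[k] c) ⊗ₜ[k] h))
      rwa [hmod] at this
    · refine Submodule.mem_comap.mpr ?_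
      have key : F ((posR k H b n n v) ⊗ₜ[k] c - v ⊗ₜ[k] (b * c))
          = posR k H b n n (Wr n ((v ⊗ₜ[k] c) ⊗ₜ[k] h))
            - posL k H b n 0 (Wr n ((v ⊗ₜ[k] c) ⊗ₜ[k] h)) := by
        rw [hFa, sub_tmul, map_sub]
        have r1 : (posR k H b n n v) ⊗ₜ[k] c
            = LinearMap.rTensor H (posR k H b n n) (v ⊗ₜ[k] c) := rfl
        have r2 : v ⊗ₜ[k] (b * c)
            = LinearMap.lTensor (H ⊗[k] (Tq k H n : Type u)) (LinearMap.mulLeft k b)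
                (v ⊗ₜ[k] c) := rfl
        rw [r1, r2, Wr_posR, Wr_mulLeft]
      rw [key]
      have hmod : (n + 1) % (n + 1) = 0 := Nat.mod_self (n + 1)
      have := memCyc I n hb n le_rfl (Wr n ((v ⊗ₜ[k] c) ⊗ₜ[k] h))
      rwa [hmod] at this
  exact main hw


lemma posR_last_tmul (b : H) (n : ℕ) (a : H) (t : (Tq k H n : Type u)) (v : H) :
    posR k H b (n + 1) (n + 1) (a ⊗ₜ[k] (t ⊗ₜ[k] v)) = a ⊗ₜ[k] (t ⊗ₜ[k] (v * b)) := by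
  rw [posR_succ, qmulR_last]; rfl

lemma Fm_posR (n : ℕ) (b : H) {j : ℕ} (hj : j ≤ n)
    (W : (H ⊗[k] (Tq k H n : Type u)) ⊗[k] H) (u : H ⊗[k] H) :
    Fm n ((LinearMap.rTensor H (posR k H b n j) W) ⊗ₜ[k] u)
      = LinearMap.rTensor H (posR k H b (n + 1) j) (Fm n (W ⊗ₜ[k] u)) := by
  induction W using TensorProduct.induction_on with
  | zero => simp
  | add w w' hw hw' => simp only [map_add, add_tmul, hw, hw']
  | tmul Y c =>
    induction Y using TensorProduct.induction_on with
    | zero => simp [zero_tmul]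
    | add w w' hw hw' => simp only [map_add, add_tmul, hw, hw']
    | tmul a t =>
      induction u using TensorProduct.induction_on with
      | zero => simp
      | add w w' hw hw' => simp only [map_add, tmul_add, hw, hw']
      | tmul x y =>
        cases j with
        | zero => rfl
        | succ m =>
          have hm : m ≠ n := by omega
          rw [posR_succ, posR_succ, qmulR_lt b n m hm]
          rfl

lemma Fm_posL (n : ℕ) (b : H) {j : ℕ} (hj : j ≤ n)
    (W : (H ⊗[k] (Tq k H n : Type u)) ⊗[k] H) (u : H ⊗[k] H) :
    Fm n ((LinearMap.rTensor H (posL k H b n j) W) ⊗ₜ[k] u)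
      = LinearMap.rTensor H (posL k H b (n + 1) j) (Fm n (W ⊗ₜ[k] u)) := by
  induction W using TensorProduct.induction_on with
  | zero => simp
  | add w w' hw hw' => simp only [map_add, add_tmul, hw, hw']
  | tmul Y c =>
    induction Y using TensorProduct.induction_on with
    | zero => simp [zero_tmul]
    | add w w' hw hw' => simp only [map_add, add_tmul, hw, hw']
    | tmul a t =>
      induction u using TensorProduct.induction_on with
      | zero => simp
      | add w w' hw hw' => simp only [map_add, tmul_add, hw, hw']
      | tmul x y =>
        cases j with
        | zero => rfl
        | succ m =>
          have hm : m ≠ n := by omega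
          rw [posL_succ, posL_succ, qmulL_lt b n m hm]
          rfl

lemma Fm_mulLeft (n : ℕ) (b : H)
    (W : (H ⊗[k] (Tq k H n : Type u)) ⊗[k] H) (u : H ⊗[k] H) :
    Fm n ((LinearMap.lTensor (H ⊗[k] (Tq k H n : Type u)) (LinearMap.mulLeft k b) W) ⊗ₜ[k] u)
      = LinearMap.rTensor H (posL k H b (n + 1) (n + 1)) (Fm n (W ⊗ₜ[k] u)) := by
  induction W using TensorProduct.induction_on with
  | zero => simp
  | add w w' hw hw' => simp only [map_add, add_tmul, hw, hw']
  | tmul Y c =>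
    induction Y using TensorProduct.induction_on with
    | zero => simp [zero_tmul]
    | add w w' hw hw' => simp only [map_add, add_tmul, hw, hw']
    | tmul a t =>
      induction u using TensorProduct.induction_on with
      | zero => simp
      | add w w' hw hw' => simp only [map_add, tmul_add, hw, hw']
      | tmul x y =>
        have e1 : (LinearMap.lTensor (H ⊗[k] (Tq k H n : Type u)) (LinearMap.mulLeft k b))
            ((a ⊗ₜ[k] t) ⊗ₜ[k] c) = (a ⊗ₜ[k] t) ⊗ₜ[k] (b * c) := rfl
        rw [e1, Fm_tmul, Fm_tmul]
        have e2 : (LinearMap.rTensor H (posL k H b (n + 1) (n + 1)))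
            ((a ⊗ₜ[k] (t ⊗ₜ[k] (c * x))) ⊗ₜ[k] y)
            = (posL k H b (n + 1) (n + 1) (a ⊗ₜ[k] (t ⊗ₜ[k] (c * x)))) ⊗ₜ[k] y := rfl
        erw [e2]
        rw [posL_succ, qmulL_last, mul_assoc]
        rfl

lemma memS1 (n : ℕ) {b : H} (hb : IsCoinvariant k H I b) (j : ℕ) (hj : j + 1 ≤ n + 1)
    (Wt : (H ⊗[k] (Tq k H (n + 1) : Type u)) ⊗[k] H) :
    LinearMap.rTensor H (posR k H b (n + 1) j) Wt
      - LinearMap.rTensor H (posL k H b (n + 1) (j + 1)) Wt ∈ Wsub I (n + 1) := by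
  induction Wt using TensorProduct.induction_on with
  | zero => simp only [map_zero, sub_zero]; exact Submodule.zero_mem _
  | add w w' hw hw' =>
      simp only [map_add, add_sub_add_comm]
      exact Submodule.add_mem _ hw hw'
  | tmul v c =>
      have e : LinearMap.rTensor H (posR k H b (n + 1) j) (v ⊗ₜ[k] c)
          - LinearMap.rTensor H (posL k H b (n + 1) (j + 1)) (v ⊗ₜ[k] c)
          = (posR k H b (n + 1) j v - posL k H b (n + 1) (j + 1) v) ⊗ₜ[k] c := by
        rw [sub_tmul]; rfl
      rw [e]
      exact Submodule.subset_span (Or.inl ⟨b, v, c, j, hb, hj, rfl⟩)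


/-- `Fm` maps `W n ⊗ (H⊗H)` into `W (n+1)`. -/
lemma FmapW (n : ℕ) (u : H ⊗[k] H) {w : (H ⊗[k] (Tq k H n : Type u)) ⊗[k] H}
    (hw : w ∈ Wsub I n) : Fm n (w ⊗ₜ[k] u) ∈ Wsub I (n + 1) := by
  set F := (Fm n) ∘ₗ (TensorProduct.mk k ((H ⊗[k] (Tq k H n : Type u)) ⊗[k] H)
    (H ⊗[k] H)).flip u with hF
  have hFa : ∀ w', F w' = Fm n (w' ⊗ₜ[k] u) := fun w' => rfl
  have main : Wsub I n ≤ Submodule.comap F (Wsub I (n + 1)) := by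
    rw [Wsub, Submodule.span_le]
    rintro x (⟨b, v, c, j, hb, hj, rfl⟩ | ⟨b, v, c, hb, rfl⟩)
    · refine Submodule.mem_comap.mpr ?_
      have key : F ((posR k H b n j v - posL k H b n (j + 1) v) ⊗ₜ[k] c)
          = LinearMap.rTensor H (posR k H b (n + 1) j) (Fm n ((v ⊗ₜ[k] c) ⊗ₜ[k] u))
            - LinearMap.rTensor H (posL k H b (n + 1) (j + 1))
                (Fm n ((v ⊗ₜ[k] c) ⊗ₜ[k] u)) := by
        rw [hFa, sub_tmul, sub_tmul, map_sub]
        have r1 : (posR k H b n j v) ⊗ₜ[k] c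
            = LinearMap.rTensor H (posR k H b n j) (v ⊗ₜ[k] c) := rfl
        have r2 : (posL k H b n (j + 1) v) ⊗ₜ[k] c
            = LinearMap.rTensor H (posL k H b n (j + 1)) (v ⊗ₜ[k] c) := rfl
        rw [r1, r2, Fm_posR n b (Nat.le_of_succ_le hj), Fm_posL n b hj]
      rw [key]
      exact memS1 I n hb j (Nat.succ_le_succ (Nat.le_of_succ_le hj)) _
    · refine Submodule.mem_comap.mpr ?_
      have key : F ((posR k H b n n v) ⊗ₜ[k] c - v ⊗ₜ[k] (b * c))
          = LinearMap.rTensor H (posR k H b (n + 1) n) (Fm n ((v ⊗ₜ[k] c) ⊗ₜ[k] u))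
            - LinearMap.rTensor H (posL k H b (n + 1) (n + 1))
                (Fm n ((v ⊗ₜ[k] c) ⊗ₜ[k] u)) := by
        rw [hFa, sub_tmul, map_sub]
        have r1 : (posR k H b n n v) ⊗ₜ[k] c
            = LinearMap.rTensor H (posR k H b n n) (v ⊗ₜ[k] c) := rfl
        have r2 : v ⊗ₜ[k] (b * c)
            = LinearMap.lTensor (H ⊗[k] (Tq k H n : Type u)) (LinearMap.mulLeft k b)
                (v ⊗ₜ[k] c) := rfl
        rw [r1, r2, Fm_posR n b le_rfl, Fm_mulLeft]
      rw [key]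
      exact memS1 I n hb n le_rfl _
  exact main hw

lemma FmapRelB_gen (n : ℕ) (g g' b : H) (hb : IsCoinvariant k H I b)
    (J : (H ⊗[k] (Tq k H n : Type u)) ⊗[k] H) :
    Fm n (J ⊗ₜ[k] ((g * b) ⊗ₜ[k] g' - g ⊗ₜ[k] (b * g'))) ∈ Wsub I (n + 1) := by
  induction J using TensorProduct.induction_on with
  | zero => simp only [zero_tmul, map_zero]; exact Submodule.zero_mem _
  | add w w' hw hw' =>
      simp only [add_tmul, map_add]
      exact Submodule.add_mem _ hw hw'
  | tmul Y c =>
    induction Y using TensorProduct.induction_on with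
    | zero =>
        simp only [zero_tmul, map_zero]
        exact Submodule.zero_mem _
    | add w w' hw hw' =>
        simp only [add_tmul, map_add]
        exact Submodule.add_mem _ hw hw'
    | tmul a t =>
        rw [tmul_sub, map_sub, Fm_tmul, Fm_tmul]
        refine Submodule.subset_span (Or.inr ⟨b, a ⊗ₜ[k] (t ⊗ₜ[k] (c * g)), g', hb, ?_⟩)
        rw [posR_last_tmul, mul_assoc]
        rfl

lemma FmapRelB (n : ℕ) {u : H ⊗[k] H} (hu : u ∈ relB k H I)
    (J : (H ⊗[k] (Tq k H n : Type u)) ⊗[k] H) :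
    Fm n (J ⊗ₜ[k] u) ∈ Wsub I (n + 1) := by
  set F := (Fm n) ∘ₗ (TensorProduct.mk k ((H ⊗[k] (Tq k H n : Type u)) ⊗[k] H)
    (H ⊗[k] H)) J with hF
  have main : relB k H I ≤ Submodule.comap F (Wsub I (n + 1)) := by
    rw [relB, Submodule.span_le]
    rintro x ⟨g, g', b, hb, rfl⟩
    exact Submodule.mem_comap.mpr (FmapRelB_gen I n g g' b hb J)
  exact main hu

lemma Psi0RelB {u : H ⊗[k] H} (hu : u ∈ relB k H I) (s : (Tq k H 0 : Type u)) :
    Psi0 s u ∈ Wsub I 0 := by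
  have main : relB k H I ≤ Submodule.comap (Psi0 (k := k) (H := H) s) (Wsub I 0) := by
    rw [relB, Submodule.span_le]
    rintro x ⟨g, g', b, hb, rfl⟩
    refine Submodule.mem_comap.mpr ?_
    rw [map_sub, Psi0_tmul, Psi0_tmul]
    refine Submodule.subset_span (Or.inr ⟨b, g ⊗ₜ[k] s, g', hb, ?_⟩)
    rw [posR_zero]
    rfl
  exact main hu

end Aux

set_option synthInstance.maxHeartbeats 1000000
set_option maxHeartbeats 1000000
open TensorProduct Coalgebra HopfAlgebra LinearMap

namespace Aux
variable {k : Type u} [Field k] {H : Type u} [Ring H] [HopfAlgebra k H]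

local notation "S" => (HopfAlgebra.antipode (R := k) (A := H))
local notation "Δ" => (Coalgebra.comul (R := k) (A := H))
local notation "μ" => (LinearMap.mul' k H)

variable (I : Submodule k H)

lemma qpush_surj : ∀ n : ℕ, Function.Surjective (qpush k I.mkQ n)
  | 0 => Function.surjective_id
  | n + 1 => TensorProduct.map_surjective (qpush_surj n) (Submodule.mkQ_surjective I)

lemma JmapW (hGal : IsGaloisExtension k H I) :
    ∀ (n : ℕ) (z : (Tq k H (n + 1) : Type u)),
      z ∈ LinearMap.ker (qpush k I.mkQ (n + 1)) → Jmap k H n z ∈ Wsub I n := by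
  intro n
  induction n with
  | zero =>
      intro z hz
      have hz' : z ∈ LinearMap.ker (LinearMap.lTensor (Tq k H 0 : Type u) I.mkQ) := hz
      rw [lTensor_mkQ] at hz'
      obtain ⟨uu, rfl⟩ := hz'
      clear hz
      induction uu using TensorProduct.induction_on with
      | zero => simp only [map_zero]; exact Submodule.zero_mem _
      | add w w' hw hw' =>
          simp only [map_add]; convert Submodule.add_mem _ hw hw' using 1; exact map_add _ _ _
      | tmul s gI =>
          have e : (LinearMap.lTensor (Tq k H 0 : Type u) I.subtype) (s ⊗ₜ[k] gI)
              = s ⊗ₜ[k] (gI : H) := rfl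
          rw [e, Jmap_zero_eq]
          exact Psi0RelB I (T_mem_relB I hGal gI.2) s
  | succ n IH =>
      intro z hz
      have hker := TensorProduct.map_ker
        (LinearMap.exact_subtype_ker_map (qpush k I.mkQ (n + 1)))
        (qpush_surj I (n + 1)) (LinearMap.exact_subtype_mkQ I)
        (Submodule.mkQ_surjective I)
      have hz' : (show (Tq k H (n + 1) : Type u) ⊗[k] H from z) ∈ LinearMap.range
            (LinearMap.lTensor (Tq k H (n + 1) : Type u) I.subtype)
          ⊔ LinearMap.range
            (LinearMap.rTensor H (LinearMap.ker (qpush k I.mkQ (n + 1))).subtype) := by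
        rw [← hker]; exact hz
      obtain ⟨y1, hy1, y2, hy2, rfl⟩ := Submodule.mem_sup.mp hz'
      erw [map_add]
      refine Submodule.add_mem _ ?_ ?_
      · obtain ⟨uu, rfl⟩ := hy1
        clear hz hz' hy2
        induction uu using TensorProduct.induction_on with
        | zero => simp only [map_zero]; exact Submodule.zero_mem _
        | add w w' hw hw' =>
            simp only [map_add]; convert Submodule.add_mem _ hw hw' using 1; exact map_add _ _ _
        | tmul t gI =>
            have e : (LinearMap.lTensor (Tq k H (n + 1) : Type u) I.subtype) (t ⊗ₜ[k] gI)
                = t ⊗ₜ[k] (gI : H) := rfl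
            rw [e, Jmap_succ]
            exact FmapRelB I n (T_mem_relB I hGal gI.2) _
      · obtain ⟨uu, rfl⟩ := hy2
        clear hz hz' hy1
        induction uu using TensorProduct.induction_on with
        | zero => simp only [map_zero]; exact Submodule.zero_mem _
        | add w w' hw hw' =>
            simp only [map_add]; convert Submodule.add_mem _ hw hw' using 1; exact map_add _ _ _
        | tmul z' g =>
            have e : (LinearMap.rTensor H
                (LinearMap.ker (qpush k I.mkQ (n + 1))).subtype) (z' ⊗ₜ[k] g)
                = (z' : (Tq k H (n + 1) : Type u)) ⊗ₜ[k] g := rfl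
            rw [e, Jmap_succ]
            exact FmapW I n _ (IH z' z'.2)

/-- part (i), membership form. -/
lemma part1 (hGal : IsGaloisExtension k H I) (n : ℕ)
    (x : (Tq k H (n + 1) : Type u) ⊗[k] H)
    (hx : (TensorProduct.map (qpush k I.mkQ (n + 1)) (LinearMap.id (M := H))) x = 0) :
    psiRep k H n x ∈ relCyc k H I n := by
  have hex : Function.Exact
      (LinearMap.rTensor H (LinearMap.ker (qpush k I.mkQ (n + 1))).subtype)
      (LinearMap.rTensor H (qpush k I.mkQ (n + 1))) :=
    rTensor_exact H (LinearMap.exact_subtype_ker_map (qpush k I.mkQ (n + 1)))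
      (qpush_surj I (n + 1))
  have hx' : x ∈ LinearMap.ker (LinearMap.rTensor H (qpush k I.mkQ (n + 1))) :=
    LinearMap.mem_ker.mpr hx
  rw [hex.linearMap_ker_eq] at hx'
  obtain ⟨uu, rfl⟩ := hx'
  clear hx
  induction uu using TensorProduct.induction_on with
  | zero => simp only [map_zero]; exact Submodule.zero_mem _
  | add w w' hw hw' => simp only [map_add]; exact Submodule.add_mem _ hw hw'
  | tmul z' h =>
      have e : (LinearMap.rTensor H
          (LinearMap.ker (qpush k I.mkQ (n + 1))).subtype) (z' ⊗ₜ[k] h)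
          = (z' : (Tq k H (n + 1) : Type u)) ⊗ₜ[k] h := rfl
      rw [e, psiRep_apply]
      exact wrapW I n h (JmapW I hGal n z' z'.2)

/-- `Ad2 ((x ⊗ y) ⊗ h) = y * h * S x`. -/
noncomputable def Ad2 : (H ⊗[k] H) ⊗[k] H →ₗ[k] H :=
  μ ∘ₗ (TensorProduct.comm k H H).toLinearMap ∘ₗ (LinearMap.lTensor H μ) ∘ₗ
    (TensorProduct.assoc k H H H).toLinearMap ∘ₗ
    (LinearMap.rTensor H (LinearMap.rTensor H S))

lemma adAct_eq (p h : H) : adAct k H (p ⊗ₜ[k] h) = Ad2 (Δ p ⊗ₜ[k] h) := rfl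

lemma Ad2_tmul (x y h : H) : Ad2 ((x ⊗ₜ[k] y) ⊗ₜ[k] h) = y * h * S x := rfl

lemma WrGp (n : ℕ) (J : (H ⊗[k] (Tq k H n : Type u)) ⊗[k] H) (u : H ⊗[k] H) (h : H) :
    Wr n ((Gp n (J ⊗ₜ[k] u)) ⊗ₜ[k] h) = Wr n (J ⊗ₜ[k] Ad2 (u ⊗ₜ[k] h)) := by
  induction J using TensorProduct.induction_on with
  | zero => simp [zero_tmul]
  | add w w' hw hw' => simp only [add_tmul, map_add, tmul_add, hw, hw']
  | tmul Y c =>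
    induction Y using TensorProduct.induction_on with
    | zero => simp [zero_tmul]
    | add w w' hw hw' => simp only [add_tmul, map_add, tmul_add, hw, hw']
    | tmul a t =>
      induction u using TensorProduct.induction_on with
      | zero => simp [zero_tmul]
      | add w w' hw hw' =>
          simp only [add_tmul, tmul_add, map_add, hw, hw']
      | tmul x y =>
          rw [Gp_tmul, Wr_tmul, Ad2_tmul, Wr_tmul]
          simp only [mul_assoc]

/-- part (ii), exact form. -/
lemma part2 (n : ℕ) (v : (Tq k H (n + 1) : Type u)) (p h : H) :
    psiRep k H n ((qdiag k H μ (n + 1) (v ⊗ₜ[k] p)) ⊗ₜ[k] h)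
      = psiRep k H n (v ⊗ₜ[k] adAct k H (p ⊗ₜ[k] h)) := by
  rw [psiRep_apply, psiRep_apply, JD n v p, adAct_eq, WrGp]

end Aux

theorem psiTilde_descends
    {k : Type u} [Field k] {H : Type u} [Ring H] [HopfAlgebra k H]
    (I : Submodule k H) (hI : IsCoidealRightIdeal k H I)
    (hGal : IsGaloisExtension k H I) (n : ℕ) :
    -- (i)  the value depends only on the classes `π(g⁰), …, π(gⁿ)`
    (∀ x : (Tq k H (n + 1) : Type u) ⊗[k] H,
      (TensorProduct.map (qpush k I.mkQ (n + 1)) (LinearMap.id (M := H))) x = 0 →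
      (Submodule.Quotient.mk (p := relCyc k H I n) (psiRep k H n x)) = 0) ∧
    -- (ii)  `ψ̃ₙ((π g)·p ⊗ h) = ψ̃ₙ((π g) ⊗ (p ▷ h))`
    (∀ (v : (Tq k H (n + 1) : Type u)) (p h : H),
      (Submodule.Quotient.mk (p := relCyc k H I n)
        (psiRep k H n ((qdiag k H (LinearMap.mul' k H) (n + 1) (v ⊗ₜ[k] p)) ⊗ₜ[k] h))) =
      (Submodule.Quotient.mk (p := relCyc k H I n)
        (psiRep k H n (v ⊗ₜ[k] (adAct k H (p ⊗ₜ[k] h)))))) ∧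
    -- (iii)  hence `ψ̃ₙ` induces `ψₙ : (H/I)^{⊗(n+1)} ⊗_H ad(H) → [H^{⊗_B(n+1)}]_B`
    (∃ ψ : (((Tq k (H ⧸ I) (n + 1) : Type u) ⊗[k] H) ⧸ relAd k H I n) →ₗ[k]
        ((H ⊗[k] (Tq k H n : Type u)) ⧸ relCyc k H I n),
      ∀ x : (Tq k H (n + 1) : Type u) ⊗[k] H,
        ψ (Submodule.Quotient.mk
            ((TensorProduct.map (qpush k I.mkQ (n + 1)) (LinearMap.id (M := H))) x)) =
          Submodule.Quotient.mk (psiRep k H n x)) := by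
  classical
  set P : (Tq k H (n + 1) : Type u) ⊗[k] H →ₗ[k] (Tq k (H ⧸ I) (n + 1) : Type u) ⊗[k] H :=
    TensorProduct.map (qpush k I.mkQ (n + 1)) (LinearMap.id (M := H)) with hPdef
  set Q : (Tq k H (n + 1) : Type u) ⊗[k] H →ₗ[k]
      ((H ⊗[k] (Tq k H n : Type u)) ⧸ relCyc k H I n) :=
    (relCyc k H I n).mkQ ∘ₗ psiRep k H n with hQdef
  have hQa : ∀ x, Q x = Submodule.Quotient.mk (psiRep k H n x) := fun x => rfl
  refine ⟨?_, ?_, ?_⟩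
  · intro x hx
    rw [Submodule.Quotient.mk_eq_zero]
    exact Aux.part1 I hGal n x hx
  · intro v p h
    rw [Aux.part2 n v p h]
  · have hsurj : Function.Surjective P :=
      TensorProduct.map_surjective (Aux.qpush_surj I (n + 1)) Function.surjective_id
    have hker : LinearMap.ker P ≤ LinearMap.ker Q := by
      intro x hx
      rw [LinearMap.mem_ker] at hx ⊢
      rw [hQa, Submodule.Quotient.mk_eq_zero]
      exact Aux.part1 I hGal n x hx
    set e := P.quotKerEquivOfSurjective hsurj with hedef
    have he : ∀ x, e (Submodule.Quotient.mk x) = P x := by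
      intro x
      simp only [hedef, LinearMap.quotKerEquivOfSurjective, LinearEquiv.trans_apply,
        LinearMap.quotKerEquivRange_apply_mk, LinearEquiv.ofTop_apply]
    set ψ₀ := (Submodule.liftQ (LinearMap.ker P) Q hker) ∘ₗ e.symm.toLinearMap with hψ₀def
    have hψ₀ : ∀ x, ψ₀ (P x) = Q x := by
      intro x
      have h1 : e.symm (P x) = Submodule.Quotient.mk x := by
        rw [LinearEquiv.symm_apply_eq, he]
      simp only [hψ₀def, LinearMap.comp_apply, LinearEquiv.coe_coe, h1,
        Submodule.liftQ_apply]
    have hAd : relAd k H I n ≤ LinearMap.ker ψ₀ := by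
      rw [relAd, Submodule.span_le]
      rintro x ⟨v, p, m, rfl⟩
      simp only [SetLike.mem_coe, LinearMap.mem_ker, map_sub]
      have e1 : (qpush k I.mkQ (n + 1)
            (qdiag k H (LinearMap.mul' k H) (n + 1) (v ⊗ₜ[k] p))) ⊗ₜ[k] m
          = P ((qdiag k H (LinearMap.mul' k H) (n + 1) (v ⊗ₜ[k] p)) ⊗ₜ[k] m) := rfl
      have e2 : (qpush k I.mkQ (n + 1) v) ⊗ₜ[k] (adAct k H (p ⊗ₜ[k] m))
          = P (v ⊗ₜ[k] adAct k H (p ⊗ₜ[k] m)) := rfl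
      rw [e1, e2, hψ₀, hψ₀, sub_eq_zero, hQa, hQa, Aux.part2 n v p m]
    refine ⟨Submodule.liftQ (relAd k H I n) ψ₀ hAd, ?_⟩
    intro x
    rw [Submodule.liftQ_apply, hψ₀, hQa]
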